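/- Let ℓ>0 and α ∈ [0,2) with α ≠ 1. For all u with ∫₀^ℓ x^α |u'|² dx < ∞ and u(ℓ)=0, one has ∫₀^ℓ |u(x)|² dx ≤ (ℓ^{2-α}/(2-α)) ∫₀^ℓ x^α |u'(x)|² dx. -/

import Mathlib

open MeasureTheory Set

/-- Weighted Poincaré inequality for `α ∈ [0,2)`, `α ≠ 1`:
`∫₀^ℓ u² ≤ (ℓ^{2-α}/(2-α)) ∫₀^ℓ x^α (u')²` for `u` with `u ℓ = 0`. -/
theorem weighted_poincare_alpha_ne_one
    (ℓ α : ℝ) (hℓ : 0 < ℓ) (hα0 : 0 ≤ α) (hα2 : α < 2) (hα1 : α ≠ 1)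
    (u : ℝ → ℝ)
    (hdiff : ∀ x ∈ Set.Ioc (0:ℝ) ℓ, DifferentiableAt ℝ u x)
    (huℓ : u ℓ = 0)
    (hL2 : MeasureTheory.IntegrableOn (fun x => (u x)^2) (Set.Ioo 0 ℓ))
    (hw : MeasureTheory.IntegrableOn (fun x => x ^ α * (deriv u x)^2) (Set.Ioo 0 ℓ)) :
    ∫ x in Set.Ioo (0:ℝ) ℓ, (u x)^2
      ≤ (ℓ ^ (2 - α) / (2 - α)) * ∫ x in Set.Ioo (0:ℝ) ℓ, x ^ α * (deriv u x)^2 := by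
  have h2α : (0:ℝ) < 2 - α := by linarith
  have h1α : (1:ℝ) - α ≠ 0 := fun h => hα1 (by linarith)
  set I := ∫ x in Set.Ioo (0:ℝ) ℓ, x ^ α * (deriv u x)^2 with hIdef
  have hI0 : 0 ≤ I :=
    setIntegral_nonneg measurableSet_Ioo
      (fun x hx => mul_nonneg (Real.rpow_nonneg hx.1.le α) (sq_nonneg _))
  -- pointwise bound
  have key : ∀ x ∈ Set.Ioo (0:ℝ) ℓ,
      (u x)^2 ≤ ((ℓ ^ (1 - α) - x ^ (1 - α)) / (1 - α)) * I := by
    intro x hx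
    obtain ⟨hx0, hxl⟩ := hx
    have hxle : x ≤ ℓ := hxl.le
    have hgInt : IntegrableOn (fun t => t ^ α * (deriv u t)^2) (Set.Ioc x ℓ) := by
      rw [integrableOn_Ioc_iff_integrableOn_Ioo]
      exact hw.mono_set (Set.Ioo_subset_Ioo hx0.le le_rfl)
    have hmeas : AEStronglyMeasurable (deriv u) (volume.restrict (Set.Ioc x ℓ)) :=
      (measurable_deriv u).aestronglyMeasurable
    have hxa : (0:ℝ) < x ^ α := Real.rpow_pos_of_pos hx0 α
    have hsqInt : IntegrableOn (fun t => (deriv u t)^2) (Set.Ioc x ℓ) := by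
      refine (hgInt.const_mul ((x ^ α)⁻¹)).mono'
        (((measurable_deriv u).pow_const 2).aestronglyMeasurable) ?_
      filter_upwards [ae_restrict_mem measurableSet_Ioc] with t ht
      have h1 : x ^ α ≤ t ^ α := Real.rpow_le_rpow hx0.le ht.1.le hα0
      rw [Real.norm_eq_abs, abs_of_nonneg (sq_nonneg _)]
      calc (deriv u t)^2 = (x ^ α)⁻¹ * (x ^ α * (deriv u t)^2) := by
            rw [← mul_assoc, inv_mul_cancel₀ hxa.ne', one_mul]
        _ ≤ (x ^ α)⁻¹ * (t ^ α * (deriv u t)^2) := by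
            gcongr
    have hu'Int : IntegrableOn (deriv u) (Set.Ioc x ℓ) := by
      refine ((integrableOn_const (C := (1:ℝ)) measure_Ioc_lt_top.ne).add hsqInt).mono' hmeas ?_
      filter_upwards with t
      simp only [Pi.add_apply]
      rw [Real.norm_eq_abs]
      nlinarith [sq_abs (deriv u t), sq_nonneg (|deriv u t| - 1), abs_nonneg (deriv u t)]
    have hFTC : ∫ t in x..ℓ, deriv u t = u ℓ - u x := by
      refine intervalIntegral.integral_eq_sub_of_hasDerivAt (fun t ht => ?_) ?_
      · rw [Set.uIcc_of_le hxle] at ht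
        exact (hdiff t ⟨lt_of_lt_of_le hx0 ht.1, ht.2⟩).hasDerivAt
      · rw [intervalIntegrable_iff_integrableOn_Ioc_of_le hxle]; exact hu'Int
    have hux : u x = -∫ t in Set.Ioc x ℓ, deriv u t := by
      rw [← intervalIntegral.integral_of_le hxle, hFTC, huℓ]; ring
    -- Cauchy-Schwarz on Ioc x ℓ
    set μ := volume.restrict (Set.Ioc x ℓ) with hμ
    set f : ℝ → ℝ := fun t => t ^ (-(α/2)) with hf
    set g : ℝ → ℝ := fun t => |deriv u t| * t ^ (α/2) with hg
    have hrpm : ∀ c : ℝ, AEStronglyMeasurable (fun t : ℝ => t ^ c) μ := fun c =>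
      (continuousOn_id.rpow_const
        (fun t ht => Or.inl (ne_of_gt (lt_trans hx0 ht.1)))).aestronglyMeasurable
        measurableSet_Ioc
    have hfmeas : AEStronglyMeasurable f μ := hrpm _
    have hgmeas : AEStronglyMeasurable g μ :=
      ((measurable_deriv u).abs.aestronglyMeasurable).mul (hrpm _)
    have haemem : ∀ᵐ t ∂μ, t ∈ Set.Ioc x ℓ := ae_restrict_mem measurableSet_Ioc
    have hfsq : Integrable (fun t => f t ^ 2) μ := by
      refine (integrable_const ((x ^ α)⁻¹)).mono'
        (hfmeas.pow 2) ?_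
      filter_upwards [haemem] with t ht
      have ht0 : (0:ℝ) < t := lt_trans hx0 ht.1
      have : f t ^ 2 = t ^ (-α) := by
        simp only [hf]
        rw [← Real.rpow_natCast (t ^ (-(α/2))) 2, ← Real.rpow_mul ht0.le]
        norm_num
      rw [Real.norm_eq_abs, abs_of_nonneg (sq_nonneg _), this, ← Real.rpow_neg hx0.le]
      exact Real.rpow_le_rpow_of_nonpos hx0 ht.1.le (neg_nonpos.2 hα0)
    have hgsq_eq : ∀ᵐ t ∂μ, g t ^ 2 = t ^ α * (deriv u t)^2 := by
      filter_upwards [haemem] with t ht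
      have ht0 : (0:ℝ) < t := lt_trans hx0 ht.1
      simp only [hg]
      rw [mul_pow, sq_abs, ← Real.rpow_natCast (t ^ (α/2)) 2, ← Real.rpow_mul ht0.le]
      norm_num; ring
    have hgsq : Integrable (fun t => g t ^ 2) μ := by
      exact (hgInt.congr (hgsq_eq.mono fun t ht => ht.symm))
    have hfg_eq : ∀ᵐ t ∂μ, f t * g t = |deriv u t| := by
      filter_upwards [haemem] with t ht
      have ht0 : (0:ℝ) < t := lt_trans hx0 ht.1
      simp only [hf, hg]
      rw [mul_comm (|deriv u t|) _, ← mul_assoc, ← Real.rpow_add ht0]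
      norm_num
    have hpq : Real.HolderConjugate 2 2 := Real.HolderConjugate.two_two
    have hfMem : MemLp f (ENNReal.ofReal 2) μ := by
      have : (ENNReal.ofReal (2:ℝ)) = 2 := by norm_num
      rw [this, memLp_two_iff_integrable_sq hfmeas]
      exact hfsq
    have hgMem : MemLp g (ENNReal.ofReal 2) μ := by
      have : (ENNReal.ofReal (2:ℝ)) = 2 := by norm_num
      rw [this, memLp_two_iff_integrable_sq hgmeas]
      exact hgsq
    have hfnn : 0 ≤ᵐ[μ] f := by
      filter_upwards [haemem] with t ht
      exact Real.rpow_nonneg (le_of_lt (lt_trans hx0 ht.1)) _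
    have hgnn : 0 ≤ᵐ[μ] g := by
      filter_upwards [haemem] with t ht
      exact mul_nonneg (abs_nonneg _) (Real.rpow_nonneg (le_of_lt (lt_trans hx0 ht.1)) _)
    have hCS := integral_mul_le_Lp_mul_Lq_of_nonneg hpq hfnn hgnn hfMem hgMem
    simp_rw [show (2:ℝ) = ((2:ℕ):ℝ) by norm_num, Real.rpow_natCast] at hCS
    set A2 := ∫ t, f t ^ 2 ∂μ with hA2
    set B2 := ∫ t, g t ^ 2 ∂μ with hB2
    have hA2nn : 0 ≤ A2 := integral_nonneg fun t => sq_nonneg _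
    have hB2nn : 0 ≤ B2 := integral_nonneg fun t => sq_nonneg _
    have habs : |u x| ≤ ∫ t, f t * g t ∂μ := by
      rw [integral_congr_ae hfg_eq, hux, abs_neg]
      simpa [Real.norm_eq_abs] using
        MeasureTheory.norm_integral_le_integral_norm (f := deriv u) (μ := μ)
    have hsq : (u x) ^ 2 ≤ A2 * B2 := by
      have h1 : (u x) ^ 2 = |u x| ^ 2 := (sq_abs _).symm
      have h2 : |u x| ^ 2 ≤ (A2 ^ (1/2:ℝ) * B2 ^ (1/2:ℝ)) ^ 2 := by
        have hnn : (0:ℝ) ≤ ∫ t, f t * g t ∂μ := le_trans (abs_nonneg _) habs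
        exact pow_le_pow_left₀ (abs_nonneg _) (le_trans habs hCS) 2
      have h3 : (A2 ^ (1/2:ℝ) * B2 ^ (1/2:ℝ)) ^ 2 = A2 * B2 := by
        rw [mul_pow, ← Real.rpow_natCast (A2 ^ (1/2:ℝ)) 2, ← Real.rpow_natCast (B2 ^ (1/2:ℝ)) 2,
          ← Real.rpow_mul hA2nn, ← Real.rpow_mul hB2nn]
        norm_num
      rw [h1]; rw [h3] at h2; exact h2
    have hA2val : A2 = (ℓ ^ (1 - α) - x ^ (1 - α)) / (1 - α) := by
      have e1 : A2 = ∫ t in Set.Ioc x ℓ, t ^ (-α) := by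
        rw [hA2, hμ]
        refine integral_congr_ae ?_
        filter_upwards [ae_restrict_mem measurableSet_Ioc] with t ht
        have ht0 : (0:ℝ) < t := lt_trans hx0 ht.1
        simp only [hf]
        rw [← Real.rpow_natCast (t ^ (-(α/2))) 2, ← Real.rpow_mul ht0.le]
        norm_num
      have e2 : ∫ t in x..ℓ, t ^ (-α) = (ℓ ^ (-α + 1) - x ^ (-α + 1)) / (-α + 1) := by
        refine integral_rpow (Or.inr ⟨?_, ?_⟩)
        · intro h; apply hα1; linarith
        · rw [Set.uIcc_of_le hxle]
          exact fun h => absurd h.1 (not_le.2 hx0)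
      rw [e1, ← intervalIntegral.integral_of_le hxle, e2]
      norm_num [show (-α + 1 : ℝ) = 1 - α by ring]
    have hB2le : B2 ≤ I := by
      have e1 : B2 = ∫ t in Set.Ioc x ℓ, t ^ α * (deriv u t) ^ 2 := by
        rw [hB2, hμ]
        exact integral_congr_ae hgsq_eq
      rw [e1, hIdef]
      refine setIntegral_mono_set hw ?_ ?_
      · filter_upwards [ae_restrict_mem measurableSet_Ioo] with t ht
        exact mul_nonneg (Real.rpow_nonneg ht.1.le α) (sq_nonneg _)
      · rw [MeasureTheory.ae_le_set]
        refine measure_mono_null (fun t ht => ?_) (Real.volume_singleton (a := ℓ))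
        obtain ⟨⟨ht1, ht2⟩, ht3⟩ := ht
        have : ¬(0 < t ∧ t < ℓ) := ht3
        push_neg at this
        exact le_antisymm ht2 (this (lt_trans hx0 ht1))
    calc (u x) ^ 2 ≤ A2 * B2 := hsq
      _ ≤ A2 * I := by gcongr
      _ = ((ℓ ^ (1 - α) - x ^ (1 - α)) / (1 - α)) * I := by rw [hA2val]
  -- final assembly
  have hrpowInt : IntegrableOn (fun x => x ^ (1 - α)) (Set.Ioo 0 ℓ) := by
    rw [← integrableOn_Ioc_iff_integrableOn_Ioo,
      ← intervalIntegrable_iff_integrableOn_Ioc_of_le hℓ.le]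
    exact intervalIntegral.intervalIntegrable_rpow' (by linarith)
  have hAint : IntegrableOn
      (fun x => ((ℓ ^ (1 - α) - x ^ (1 - α)) / (1 - α)) * I) (Set.Ioo 0 ℓ) := by
    exact (((integrableOn_const measure_Ioo_lt_top.ne).sub hrpowInt).div_const
      (1 - α)).mul_const I
  have hpow1 : ∫ x in Set.Ioo (0:ℝ) ℓ, x ^ (1 - α) = ℓ ^ (2 - α) / (2 - α) := by
    rw [← integral_Ioc_eq_integral_Ioo, ← intervalIntegral.integral_of_le hℓ.le,
      integral_rpow (Or.inl (by linarith))]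
    rw [Real.zero_rpow (by intro h; linarith : (1 - α + 1 : ℝ) ≠ 0)]
    norm_num [show (1 - α + 1 : ℝ) = 2 - α by ring]
  have hAval : ∫ x in Set.Ioo (0:ℝ) ℓ, ((ℓ ^ (1 - α) - x ^ (1 - α)) / (1 - α))
      = ℓ ^ (2 - α) / (2 - α) := by
    rw [integral_div]
    rw [integral_sub (integrableOn_const (μ := volume) (s := Set.Ioo (0:ℝ) ℓ) (C := ℓ ^ (1 - α)) measure_Ioo_lt_top.ne) hrpowInt]
    rw [setIntegral_const, hpow1, measureReal_def, Real.volume_Ioo, show ℓ - (0:ℝ) = ℓ by ring,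
      ENNReal.toReal_ofReal hℓ.le]
    have hl2 : ℓ • ℓ ^ (1 - α) = ℓ ^ (2 - α) := by
      rw [smul_eq_mul]
      rw [show (2 - α : ℝ) = 1 + (1 - α) by ring, Real.rpow_add hℓ, Real.rpow_one]
    rw [hl2]
    field_simp
    ring
  calc ∫ x in Set.Ioo (0:ℝ) ℓ, (u x) ^ 2
      ≤ ∫ x in Set.Ioo (0:ℝ) ℓ, ((ℓ ^ (1 - α) - x ^ (1 - α)) / (1 - α)) * I :=
        setIntegral_mono_on hL2 hAint measurableSet_Ioo key
    _ = (∫ x in Set.Ioo (0:ℝ) ℓ, ((ℓ ^ (1 - α) - x ^ (1 - α)) / (1 - α))) * I :=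
        integral_mul_const _ _
    _ = (ℓ ^ (2 - α) / (2 - α)) * I := by rw [hAval]
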